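/- Let n points be chosen i.i.d. uniformly from the unit square with the coordinatewise partial order. The expected number of minimal elements of the resulting random poset equals the n-th harmonic number h_n = Σ_{k=1}^{n} 1/k. -/

import Mathlib

open MeasureTheory

/-- The distribution of `n` i.i.d. points uniform on the unit square `[0,1]²`,
with the coordinatewise (2D / causal) order on `ℝ × ℝ`. -/
noncomputable def unitSquareIID (n : ℕ) : Measure (Fin n → ℝ × ℝ) :=
  Measure.pi fun _ =>
    (volume : Measure (ℝ × ℝ)).restrict (Set.Icc 0 1 ×ˢ Set.Icc 0 1)

open Set in
section


noncomputable def μ0 : Measure (ℝ × ℝ) := (volume : Measure (ℝ × ℝ)).restrict (Set.Icc 0 1 ×ˢ Set.Icc 0 1)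

lemma sq_meas : MeasurableSet (Set.Icc (0:ℝ) 1 ×ˢ Set.Icc (0:ℝ) 1) :=
  measurableSet_Icc.prod measurableSet_Icc

lemma vol_sq : (volume : Measure (ℝ × ℝ)) (Set.Icc 0 1 ×ˢ Set.Icc 0 1) = 1 := by
  rw [Measure.volume_eq_prod, Measure.prod_prod]
  simp [Real.volume_Icc]

instance : IsProbabilityMeasure μ0 := ⟨by rw [μ0, Measure.restrict_apply MeasurableSet.univ, Set.univ_inter, vol_sq]⟩

lemma meas_lt_prod : MeasurableSet {p : (ℝ×ℝ)×(ℝ×ℝ) | p.1 < p.2} := by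
  simp only [Prod.lt_iff, Set.setOf_or, Set.setOf_and]
  exact (((measurableSet_lt measurable_fst.fst measurable_snd.fst).inter
      (measurableSet_le measurable_fst.snd measurable_snd.snd)).union
    ((measurableSet_le measurable_fst.fst measurable_snd.fst).inter
      (measurableSet_lt measurable_fst.snd measurable_snd.snd)))

lemma measure_S {x : ℝ × ℝ} (hx : x ∈ Set.Icc (0:ℝ) 1 ×ˢ Set.Icc (0:ℝ) 1) :
    μ0 {y | ¬ y < x} = ENNReal.ofReal (1 - x.1 * x.2) := by
  obtain ⟨⟨h1, h2⟩, h3, h4⟩ := hx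
  have hset : {y : ℝ × ℝ | y < x} = Set.Iic x \ {x} := by
    ext y; simp [lt_iff_le_and_ne, Set.mem_Iic]
  have hmeas : MeasurableSet {y : ℝ × ℝ | y < x} := by
    rw [hset]; exact measurableSet_Iic.diff (measurableSet_singleton x)
  have hlt : μ0 {y : ℝ × ℝ | y < x} = ENNReal.ofReal (x.1 * x.2) := by
    rw [hset]
    have : μ0 {x} = 0 := by
      apply le_antisymm _ zero_le
      calc μ0 {x} ≤ volume {x} := Measure.restrict_apply_le _ _
        _ = 0 := by simp [Measure.volume_eq_prod]
    rw [measure_diff_null this, μ0, Measure.restrict_apply measurableSet_Iic]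
    have : Set.Iic x ∩ (Set.Icc 0 1 ×ˢ Set.Icc 0 1) = Set.Icc 0 x.1 ×ˢ Set.Icc 0 x.2 := by
      rw [← Set.Iic_prod_Iic, Set.prod_inter_prod]
      congr 1 <;> ext t <;> simp <;> constructor
      · rintro ⟨a, b, c⟩; exact ⟨b, a⟩
      · rintro ⟨a, b⟩; exact ⟨b, a, b.trans h2⟩
      · rintro ⟨a, b, c⟩; exact ⟨b, a⟩
      · rintro ⟨a, b⟩; exact ⟨b, a, b.trans h4⟩
    rw [this, Measure.volume_eq_prod, Measure.prod_prod, Real.volume_Icc, Real.volume_Icc]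
    rw [← ENNReal.ofReal_mul (by linarith)]; ring_nf
  have : {y : ℝ × ℝ | ¬ y < x} = {y : ℝ × ℝ | y < x}ᶜ := rfl
  rw [this, prob_compl_eq_one_sub hmeas, hlt, ENNReal.ofReal_sub _ (by positivity), ENNReal.ofReal_one]

lemma key (n : ℕ) (i : Fin n) :
    unitSquareIID n {ω | ∀ j, ¬ ω j < ω i}
      = ∫⁻ x, (μ0 {y | ¬ y < x}) ^ (n-1) ∂μ0 := by
  classical
  set A : Set (Fin n → ℝ×ℝ) := {ω | ∀ j, ¬ ω j < ω i} with hAdef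
  let p : Fin n → Prop := fun j => j = i
  letI : Unique {j // p j} := ⟨⟨⟨i, rfl⟩⟩, fun j => Subtype.ext j.2⟩
  let e := MeasurableEquiv.piEquivPiSubtypeProd (fun _ : Fin n => ℝ×ℝ) p
  have hmp := measurePreserving_piEquivPiSubtypeProd (fun _ : Fin n => μ0) p
  set B : Set (({j // p j} → ℝ×ℝ) × ({j // ¬ p j} → ℝ×ℝ)) :=
    {q | ∀ j : {j // ¬ p j}, ¬ q.2 j < q.1 default} with hBdef
  have hB : MeasurableSet B := by
    have : B = ⋂ j : {j // ¬ p j},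
        (fun q : ({j // p j} → ℝ×ℝ) × ({j // ¬ p j} → ℝ×ℝ) => ((q.2 j : ℝ×ℝ), q.1 default))
          ⁻¹' {r : (ℝ×ℝ)×(ℝ×ℝ) | r.1 < r.2}ᶜ := by
      ext q; simp [hBdef]
    rw [this]
    exact MeasurableSet.iInter fun j =>
      (((measurable_pi_apply j).comp measurable_snd).prodMk
        ((measurable_pi_apply _).comp measurable_fst)) meas_lt_prod.compl
  have he : ∀ ω : Fin n → ℝ×ℝ, e ω = (fun j => ω j.1, fun j => ω j.1) := fun _ => rfl
  have hA : A = e ⁻¹' B := by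
    ext ω
    have hd : ((default : {j // p j}) : Fin n) = i := rfl
    simp only [Set.mem_preimage, he, hBdef, Set.mem_setOf_eq, hAdef, hd]
    constructor
    · intro h j; exact h _
    · intro h j
      by_cases hj : p j
      · have : ω j = ω i := by rw [hj]
        rw [this]; exact lt_irrefl _
      · exact h ⟨j, hj⟩
  have hpi : unitSquareIID n = Measure.pi (fun _ => μ0) := rfl
  rw [hpi, hA, hmp.measure_preimage hB.nullMeasurableSet, Measure.prod_apply hB]
  have inner : ∀ f : {j // p j} → ℝ×ℝ,
      (Measure.pi fun _ : {j // ¬ p j} => μ0) (Prod.mk f ⁻¹' B)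
        = (μ0 {y | ¬ y < f default}) ^ (n-1) := by
    intro f
    have hs : Prod.mk f ⁻¹' B = Set.univ.pi (fun _ : {j // ¬ p j} => {y : ℝ×ℝ | ¬ y < f default}) := by
      ext g; simp [hBdef, Set.mem_pi]
    rw [hs, Measure.pi_pi, Finset.prod_const]
    congr 1
    rw [Finset.card_univ, Fintype.card_subtype_compl, Fintype.card_subtype_eq, Fintype.card_fin]
  simp only [inner]
  have h2 := (measurePreserving_funUnique μ0 {j // p j}).lintegral_comp_emb
    (MeasurableEquiv.funUnique _ _).measurableEmbedding (fun x => μ0 {y | ¬ y < x} ^ (n-1))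
  convert h2 using 2
  congr!
  rfl

lemma key2 (n : ℕ) :
    (∫⁻ x, (μ0 {y | ¬ y < x}) ^ (n-1) ∂μ0).toReal
      = ∫ x, (1 - x.1 * x.2) ^ (n-1) ∂μ0 := by
  have hmem : ∀ᵐ x ∂μ0, x ∈ Set.Icc (0:ℝ) 1 ×ˢ Set.Icc (0:ℝ) 1 := ae_restrict_mem sq_meas
  have hcongr : (fun x => (μ0 {y | ¬ y < x}) ^ (n-1))
      =ᵐ[μ0] fun x => ENNReal.ofReal ((1 - x.1 * x.2) ^ (n-1)) := by
    filter_upwards [hmem] with x hx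
    rw [measure_S hx, ← ENNReal.ofReal_pow]
    obtain ⟨⟨h1, h2⟩, h3, h4⟩ := hx
    nlinarith
  rw [lintegral_congr_ae hcongr]
  rw [← integral_eq_lintegral_of_nonneg_ae]
  · filter_upwards [hmem] with x hx
    obtain ⟨⟨h1, h2⟩, h3, h4⟩ := hx
    have : x.1 * x.2 ≤ 1 := by nlinarith
    exact pow_nonneg (by linarith) _
  · exact ((continuous_const.sub (continuous_fst.mul continuous_snd)).pow _).aestronglyMeasurable

lemma inner_int (n : ℕ) (hn : 1 ≤ n) {u : ℝ} (h0 : 0 ≤ u) (h1 : u ≤ 1) :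
    (n:ℝ) * ∫ v in (0:ℝ)..1, (1 - v*u)^(n-1) = ∑ k ∈ Finset.range n, (1-u)^k := by
  by_cases hu : u = 0
  · subst hu; simp
  · have h2 : ∫ v in (0:ℝ)..1, (1 - v*u)^(n-1)
        = u⁻¹ • ∫ t in (0:ℝ)..u, (1-t)^(n-1) := by
      have := intervalIntegral.integral_comp_mul_right (fun t => (1-t)^(n-1)) hu (a := 0) (b := 1)
      simpa using this
    have h3 : ∫ t in (0:ℝ)..u, (1-t)^(n-1) = (1 - (1-u)^n) / n := by
      have := intervalIntegral.integral_comp_sub_left (a := 0) (b := u) (fun t => t^(n-1)) 1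
      rw [this, integral_pow, Nat.sub_add_cancel hn, Nat.cast_sub hn]
      norm_num
    rw [h2, h3, geom_sum_eq (by intro h; apply hu; linarith [sub_eq_iff_eq_add.mp h]) n]
    have hn0 : (n:ℝ) ≠ 0 := Nat.cast_ne_zero.mpr (by omega)
    rw [show (1-u)-1 = -u from by ring, div_neg, smul_eq_mul]
    field_simp
    ring

lemma calc1 (n : ℕ) (hn : 1 ≤ n) :
    (n:ℝ) * ∫ x, (1 - x.1 * x.2)^(n-1) ∂μ0 = ∑ k ∈ Finset.range n, (1:ℝ)/(k+1) := by
  have hprod : μ0 = (volume.restrict (Set.Icc (0:ℝ) 1)).prod (volume.restrict (Set.Icc (0:ℝ) 1)) := by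
    rw [Measure.prod_restrict, ← Measure.volume_eq_prod]; rfl
  have hint : Integrable (fun x : ℝ×ℝ => (1 - x.1*x.2)^(n-1)) μ0 :=
    ((continuous_const.sub (continuous_fst.mul continuous_snd)).pow _).continuousOn.integrableOn_compact
      (isCompact_Icc.prod isCompact_Icc)
  have cIcc : ∀ g : ℝ → ℝ, ∫ t in Set.Icc (0:ℝ) 1, g t = ∫ t in (0:ℝ)..1, g t := by
    intro g
    rw [integral_Icc_eq_integral_Ioc, intervalIntegral.integral_of_le zero_le_one]
  rw [hprod, integral_prod _ (hprod ▸ hint), cIcc, ← intervalIntegral.integral_const_mul]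
  rw [intervalIntegral.integral_congr (g := fun u => ∑ k ∈ Finset.range n, (1-u)^k) ?_]
  · rw [intervalIntegral.integral_finset_sum
      (fun k _ => Continuous.intervalIntegrable (by continuity) _ _)]
    refine Finset.sum_congr rfl fun k _ => ?_
    rw [intervalIntegral.integral_comp_sub_left (fun t => t^k) 1]
    norm_num [integral_pow]
  · intro u hu
    rw [Set.uIcc_of_le zero_le_one] at hu
    simp only
    rw [cIcc, show (fun v => (1 - u*v)^(n-1)) = fun v => (1 - v*u)^(n-1) from
      funext fun v => by rw [mul_comm]]
    exact inner_int n hn hu.1 hu.2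

instance (n : ℕ) : IsProbabilityMeasure (unitSquareIID n) := by
  unfold unitSquareIID
  have : IsProbabilityMeasure ((volume : Measure (ℝ×ℝ)).restrict (Set.Icc 0 1 ×ˢ Set.Icc 0 1)) :=
    inferInstanceAs (IsProbabilityMeasure μ0)
  infer_instance

theorem stmt9 (n : ℕ) (hn : 1 ≤ n) :
    ∫ ω, (({i : Fin n | ∀ j : Fin n, ¬ω j < ω i}.ncard : ℝ)) ∂(unitSquareIID n)
      = ∑ k ∈ Finset.range n, (1 : ℝ) / (k + 1) := by
  classical
  have hAmeas : ∀ i : Fin n, MeasurableSet {ω : Fin n → ℝ×ℝ | ∀ j, ¬ ω j < ω i} := by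
    intro i
    have : {ω : Fin n → ℝ×ℝ | ∀ j, ¬ ω j < ω i}
        = ⋂ j, (fun ω : Fin n → ℝ×ℝ => (ω j, ω i)) ⁻¹' {r : (ℝ×ℝ)×(ℝ×ℝ) | r.1 < r.2}ᶜ := by
      ext ω; simp
    rw [this]
    exact MeasurableSet.iInter fun j =>
      ((measurable_pi_apply j).prodMk (measurable_pi_apply i)) meas_lt_prod.compl
  have hcount : (fun ω : Fin n → ℝ×ℝ => (({i : Fin n | ∀ j : Fin n, ¬ω j < ω i}.ncard : ℝ)))
      = fun ω => ∑ i : Fin n,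
          Set.indicator {ω' : Fin n → ℝ×ℝ | ∀ j, ¬ ω' j < ω' i} (1 : (Fin n → ℝ × ℝ) → ℝ) ω := by
    funext ω
    rw [Set.ncard_eq_toFinset_card', Set.toFinset_setOf, Finset.card_filter]
    push_cast
    refine Finset.sum_congr rfl fun i _ => ?_
    rw [Set.indicator_apply]
    simp [Set.mem_setOf_eq]
  rw [hcount]
  rw [integral_finset_sum (μ := unitSquareIID n) Finset.univ
    (f := fun i (ω : Fin n → ℝ×ℝ) =>
      Set.indicator {ω' : Fin n → ℝ×ℝ | ∀ j, ¬ ω' j < ω' i} (1 : (Fin n → ℝ × ℝ) → ℝ) ω)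
    (fun i _ => (integrable_indicator_iff (hAmeas i)).2
      (integrableOn_const (measure_ne_top _ _)))]
  have hterm : ∀ i : Fin n,
      (∫ ω, Set.indicator {ω' : Fin n → ℝ×ℝ | ∀ j, ¬ ω' j < ω' i} (1 : (Fin n → ℝ × ℝ) → ℝ) ω ∂unitSquareIID n)
        = ∫ x, (1 - x.1 * x.2)^(n-1) ∂μ0 := by
    intro i
    rw [integral_indicator_one (hAmeas i), measureReal_def, key n i, key2]
  simp_rw [hterm]
  rw [Finset.sum_const, Finset.card_univ, Fintype.card_fin, nsmul_eq_mul]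
  exact calc1 n hn

end
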